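/- arXiv:2309.09788 — 3 statements merged into one kernel-verified Lean document; each statement's English description precedes it below -/
import Mathlib

section
/- Let G be a simple graph with edge set E and maximum degree Δ ≥ 1, and let ρ_max be the largest eigenvalue of the Laplacian matrix L(G) = D(G) - A(G). Then ρ_max > Δ and ρ_max ≤ max{deg(u) + deg(v) : uv ∈ E}. -/
open Polynomial
open Matrix Finset

lemma charpoly_isRoot_iff' {V : Type*} [Fintype V] [DecidableEq V]
    (A : Matrix V V ℝ) (μ : ℝ) :
    A.charpoly.IsRoot μ ↔ (μ • (1 : Matrix V V ℝ) - A).det = 0 := by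
  rw [Polynomial.IsRoot, Matrix.charpoly, _root_.eval_det, matPolyEquiv_charmatrix]
  simp [smul_one_eq_diagonal]

lemma isRoot_of_mem_spectrum' {V : Type*} [Fintype V] [DecidableEq V]
    (A : Matrix V V ℝ) (μ : ℝ) (h : μ ∈ spectrum ℝ A) : A.charpoly.IsRoot μ := by
  rw [charpoly_isRoot_iff']
  rw [spectrum.mem_iff, Algebra.algebraMap_eq_smul_one] at h
  by_contra hdet
  exact h ((Matrix.isUnit_iff_isUnit_det _).mpr (isUnit_iff_ne_zero.mpr hdet))

lemma posSemidef_shift {V : Type*} [Fintype V] [DecidableEq V]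
    (A : Matrix V V ℝ) (hA : A.IsHermitian) (rho : ℝ)
    (hmax : ∀ mu : ℝ, A.charpoly.IsRoot mu → mu ≤ rho) :
    (rho • (1 : Matrix V V ℝ) - A).PosSemidef := by
  have hBh : (rho • (1 : Matrix V V ℝ) - A).IsHermitian := by
    refine Matrix.IsHermitian.sub ?_ hA
    unfold Matrix.IsHermitian
    rw [conjTranspose_smul, conjTranspose_one, star_trivial]
  refine hBh.posSemidef_iff_eigenvalues_nonneg.mpr (fun i => show (0:ℝ) ≤ _ from ?_)
  have hs := hBh.eigenvalues_mem_spectrum_real i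
  set μ := hBh.eigenvalues i
  rw [spectrum.mem_iff, Algebra.algebraMap_eq_smul_one] at hs
  have hkey : μ • (1 : Matrix V V ℝ) - (rho • (1 : Matrix V V ℝ) - A)
      = -((rho - μ) • (1 : Matrix V V ℝ) - A) := by
    rw [sub_smul]; abel
  rw [hkey, IsUnit.neg_iff] at hs
  have hdet : ((rho - μ) • (1 : Matrix V V ℝ) - A).det = 0 := by
    by_contra hdet
    exact hs ((Matrix.isUnit_iff_isUnit_det _).mpr (isUnit_iff_ne_zero.mpr hdet))
  have := hmax _ ((charpoly_isRoot_iff' A (rho - μ)).mpr hdet)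
  linarith


/-- For a simple graph `G` with maximum degree `Δ ≥ 1`, the largest
eigenvalue `ρ_max` of the Laplacian `L(G) = D(G) - A(G)` satisfies `ρ_max > Δ` and
`ρ_max ≤ max{deg u + deg v : uv ∈ E}`. -/
theorem lap_maxEigenvalue_bounds {V : Type*} [Fintype V] [DecidableEq V]
    (G : SimpleGraph V) [DecidableRel G.Adj] (hΔ : 1 ≤ G.maxDegree) (rho : ℝ)
    (hroot : (G.lapMatrix ℝ).charpoly.IsRoot rho)
    (hmax : ∀ mu : ℝ, (G.lapMatrix ℝ).charpoly.IsRoot mu → mu ≤ rho) :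
    (G.maxDegree : ℝ) < rho ∧
      ∃ u v : V, G.Adj u v ∧ rho ≤ (G.degree u : ℝ) + (G.degree v : ℝ) := by
  classical
  set A := G.lapMatrix ℝ with hAdef
  have hAh : A.IsHermitian := (G.posSemidef_lapMatrix ℝ).1
  have hB := posSemidef_shift A hAh rho hmax
  have hq : ∀ x : V → ℝ, x ⬝ᵥ (A *ᵥ x) ≤ rho * (x ⬝ᵥ x) := by
    intro x
    have h0 := hB.dotProduct_mulVec_nonneg x
    rw [star_trivial, sub_mulVec, smul_mulVec, one_mulVec, dotProduct_sub,
      dotProduct_smul] at h0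
    have : (0:ℝ) ≤ rho * (x ⬝ᵥ x) - x ⬝ᵥ (A *ᵥ x) := by
      simpa [smul_eq_mul] using h0
    linarith
  have hnV : Nonempty V := by
    by_contra h
    rw [not_nonempty_iff] at h
    have h0 : G.maxDegree = 0 := by
      simp [SimpleGraph.maxDegree, Finset.univ_eq_empty]
    omega
  obtain ⟨u₀, hu₀⟩ := G.exists_maximal_degree_vertex
  set Δ : ℕ := G.maxDegree with hΔdef
  set x : V → ℝ := fun w => if w = u₀ then (Δ : ℝ) else if G.Adj u₀ w then -1 else 0 with hx
  -- norm computation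
  have hnorm : x ⬝ᵥ x = (Δ:ℝ)^2 + Δ := by
    have hterm : ∀ w, x w * x w =
        (if w = u₀ then (Δ:ℝ)^2 else 0) + (if G.Adj u₀ w then 1 else 0) := by
      intro w
      by_cases h1 : w = u₀
      · subst h1; simp [hx, sq]
      · by_cases h2 : G.Adj u₀ w <;> simp [hx, h1, h2]
    rw [dotProduct]
    rw [Finset.sum_congr rfl (fun w _ => hterm w), Finset.sum_add_distrib,
      Finset.sum_ite_eq' Finset.univ u₀]
    simp only [Finset.mem_univ, if_true]
    have hcard : (∑ w : V, if G.Adj u₀ w then (1:ℝ) else 0) = (G.degree u₀ : ℝ) := by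
      rw [Finset.sum_boole]
      congr 1
      rw [SimpleGraph.degree, SimpleGraph.neighborFinset_eq_filter]
    rw [hcard, ← hu₀]
  have hform : x ⬝ᵥ (A *ᵥ x) =
      (∑ i : V, ∑ j : V, if G.Adj i j then (x i - x j)^2 else 0) / 2 := by
    rw [← Matrix.toLinearMap₂'_apply', hAdef, SimpleGraph.lapMatrix_toLinearMap₂']
  set f : V → V → ℝ := fun i j => if G.Adj i j then (x i - x j)^2 else 0 with hf
  have hf0 : ∀ i j, 0 ≤ f i j := by
    intro i j
    by_cases h : G.Adj i j <;> simp [hf, h] <;> positivity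
  have hrow0 : ∀ i, (0:ℝ) ≤ ∑ j, f i j := fun i => Finset.sum_nonneg fun j _ => hf0 i j
  have hne : u₀ ∉ G.neighborFinset u₀ := by simp
  have hrowu : (∑ j, f u₀ j) = (Δ:ℝ) * ((Δ:ℝ)+1)^2 := by
    have heach : ∀ j, f u₀ j = if G.Adj u₀ j then ((Δ:ℝ)+1)^2 else 0 := by
      intro j
      by_cases h : G.Adj u₀ j
      · have hj : ¬ (j = u₀) := fun e => G.irrefl (e ▸ h)
        simp only [hf, hx, if_pos h, if_pos rfl, if_neg hj, if_true]
        ring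
      · simp [hf, h]
    rw [Finset.sum_congr rfl (fun j _ => heach j), ← Finset.sum_filter,
      ← SimpleGraph.neighborFinset_eq_filter, Finset.sum_const, ← SimpleGraph.degree, ← hu₀,
      nsmul_eq_mul]
  have hrowv : ∀ i ∈ G.neighborFinset u₀, ((Δ:ℝ)+1)^2 ≤ ∑ j, f i j := by
    intro i hi
    rw [SimpleGraph.mem_neighborFinset] at hi
    have hiu : ¬ (i = u₀) := fun e => G.irrefl (e ▸ hi)
    have hfi : f i u₀ = ((Δ:ℝ)+1)^2 := by
      simp [hf, hx, hi, hi.symm, hiu]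
      ring
    calc ((Δ:ℝ)+1)^2 = f i u₀ := hfi.symm
      _ ≤ ∑ j, f i j := Finset.single_le_sum (fun j _ => hf0 i j) (Finset.mem_univ u₀)
  have hS : 2 * ((Δ:ℝ) * ((Δ:ℝ)+1)^2) ≤ ∑ i : V, ∑ j : V, f i j := by
    have h1 : ∑ i ∈ insert u₀ (G.neighborFinset u₀), (∑ j, f i j) ≤ ∑ i : V, ∑ j, f i j :=
      Finset.sum_le_sum_of_subset_of_nonneg (Finset.subset_univ _) (fun i _ _ => hrow0 i)
    rw [Finset.sum_insert hne, hrowu] at h1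
    have h2 : (Δ:ℝ) * ((Δ:ℝ)+1)^2 ≤ ∑ i ∈ G.neighborFinset u₀, (∑ j, f i j) := by
      calc (Δ:ℝ) * ((Δ:ℝ)+1)^2
          = (G.neighborFinset u₀).card * ((Δ:ℝ)+1)^2 := by
            rw [← SimpleGraph.degree, ← hu₀]
        _ = ∑ _i ∈ G.neighborFinset u₀, ((Δ:ℝ)+1)^2 := by
            rw [Finset.sum_const, nsmul_eq_mul]
        _ ≤ _ := Finset.sum_le_sum hrowv
    linarith
  have hquad : (Δ:ℝ) * ((Δ:ℝ)+1)^2 ≤ x ⬝ᵥ (A *ᵥ x) := by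
    rw [hform]; linarith
  have hΔ1 : (1:ℝ) ≤ (Δ:ℝ) := by exact_mod_cast hΔ
  have hpos : (0:ℝ) < (Δ:ℝ)^2 + Δ := by nlinarith
  have hfin : ((Δ:ℝ)+1) * ((Δ:ℝ)^2 + Δ) ≤ rho * ((Δ:ℝ)^2 + Δ) := by
    have := hq x
    rw [hnorm] at this
    nlinarith
  have hΔ1ρ : (Δ:ℝ) + 1 ≤ rho := (mul_le_mul_iff_of_pos_right hpos).mp hfin
  have hΔρ : (G.maxDegree : ℝ) < rho := by rw [← hΔdef]; linarith
  have hρpos : (0:ℝ) < rho := by linarith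
  -- Part 2: eigenvector argument
  have hdet : (rho • (1 : Matrix V V ℝ) - A).det = 0 := (charpoly_isRoot_iff' A rho).mp hroot
  obtain ⟨v, hv0, hveq⟩ := (Matrix.exists_mulVec_eq_zero_iff).mpr hdet
  have hAv : A *ᵥ v = rho • v := by
    rw [sub_mulVec, smul_mulVec, one_mulVec, sub_eq_zero] at hveq
    exact hveq.symm
  obtain ⟨u, -, hu⟩ := Finset.exists_max_image Finset.univ (fun w => |v w|) ⟨u₀, Finset.mem_univ _⟩
  have hvu : 0 < |v u| := by
    rcases Function.ne_iff.mp hv0 with ⟨w, hw⟩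
    exact lt_of_lt_of_le (abs_pos.mpr hw) (hu w (Finset.mem_univ w))
  set s : ℝ := if 0 < v u then 1 else -1 with hs
  set y : V → ℝ := s • v with hy
  have hAy : A *ᵥ y = rho • y := by rw [hy, Matrix.mulVec_smul, hAv, smul_comm]
  have hyu : y u = |v u| := by
    by_cases h : 0 < v u
    · simp [hy, hs, h, abs_of_pos h]
    · have hneg : v u < 0 := by
        rcases lt_trichotomy (v u) 0 with h1|h1|h1
        · exact h1
        · exfalso; rw [h1] at hvu; simp at hvu
        · exact absurd h1 h
      simp [hy, hs, h, abs_of_neg hneg]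
  have hybd : ∀ w, |y w| ≤ y u := by
    intro w
    rw [hyu]
    have habs : |s| = 1 := by by_cases h : 0 < v u <;> simp [hs, h]
    rw [hy]
    simp only [Pi.smul_apply, smul_eq_mul, abs_mul, habs, one_mul]
    exact hu w (Finset.mem_univ w)
  have hyupos : 0 < y u := hyu ▸ hvu
  have hmul : ∀ w : V, rho * y w =
      (G.degree w : ℝ) * y w - ∑ z ∈ G.neighborFinset w, y z := by
    intro w
    have h1 := congrFun hAy w
    rw [hAdef, SimpleGraph.lapMatrix_mulVec_apply] at h1
    rw [h1]
    simp
  have hNu : (G.neighborFinset u).Nonempty := by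
    by_contra h
    rw [Finset.not_nonempty_iff_eq_empty] at h
    have hdeg : G.degree u = 0 := by rw [SimpleGraph.degree, h, Finset.card_empty]
    have h2 := hmul u
    rw [hdeg, h] at h2
    simp only [Nat.cast_zero, zero_mul, Finset.sum_empty, sub_zero] at h2
    linarith [mul_pos hρpos hyupos]
  obtain ⟨w₀, hw₀mem, hw₀⟩ := Finset.exists_min_image (G.neighborFinset u) y hNu
  have hadj : G.Adj u w₀ := by rwa [SimpleGraph.mem_neighborFinset] at hw₀mem
  refine ⟨hΔρ, u, w₀, hadj, ?_⟩
  have hd0u : (0:ℝ) ≤ (G.degree u : ℝ) := Nat.cast_nonneg _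
  have hd0w : (0:ℝ) ≤ (G.degree w₀ : ℝ) := Nat.cast_nonneg _
  have h1 : rho * y u ≤ (G.degree u : ℝ) * (y u - y w₀) := by
    have hm := hmul u
    have hsum : (G.degree u : ℝ) * y w₀ ≤ ∑ z ∈ G.neighborFinset u, y z := by
      calc (G.degree u : ℝ) * y w₀ = ∑ _z ∈ G.neighborFinset u, y w₀ := by
            rw [Finset.sum_const, nsmul_eq_mul, SimpleGraph.degree]
        _ ≤ _ := Finset.sum_le_sum (fun z hz => hw₀ z hz)
    rw [mul_sub]
    linarith
  have h2 : -(rho * y w₀) ≤ (G.degree w₀ : ℝ) * (y u - y w₀) := by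
    have hm := hmul w₀
    have hsum : ∑ z ∈ G.neighborFinset w₀, y z ≤ (G.degree w₀ : ℝ) * y u := by
      calc ∑ z ∈ G.neighborFinset w₀, y z ≤ ∑ _z ∈ G.neighborFinset w₀, y u :=
            Finset.sum_le_sum (fun z _ => le_trans (le_abs_self _) (hybd z))
        _ = (G.degree w₀ : ℝ) * y u := by
            rw [Finset.sum_const, nsmul_eq_mul, SimpleGraph.degree]
    rw [mul_sub]
    linarith
  have ht : 0 < y u - y w₀ := by
    by_contra h
    push_neg at h
    have hnp : (G.degree u : ℝ) * (y u - y w₀) ≤ 0 :=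
      mul_nonpos_of_nonneg_of_nonpos hd0u (by linarith)
    linarith [mul_pos hρpos hyupos]
  have h3 : rho * (y u - y w₀) ≤ ((G.degree u : ℝ) + (G.degree w₀ : ℝ)) * (y u - y w₀) := by
    rw [mul_sub, add_mul]
    linarith
  exact le_of_mul_le_mul_right h3 ht
end

section
/- Let G be a connected simple graph on n vertices. If G is bipartite, then the signless Laplacian |L(G)| has 0 as an eigenvalue with multiplicity exactly 1. If G is not bipartite, then det(|L(G)|) is a positive integer divisible by 4. -/
open Polynomial

/-- The signless Laplacian matrix `|L(G)| = D(G) + A(G)` of a simple graph. -/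
def SimpleGraph.signlessLapMatrix {V : Type*} [Fintype V] [DecidableEq V]
    (G : SimpleGraph V) [DecidableRel G.Adj] : Matrix V V ℝ :=
  G.degMatrix ℝ + G.adjMatrix ℝ

namespace SignlessAux

open Matrix Finset

variable {V : Type*} [Fintype V] [DecidableEq V]

/-- Conjugating by a diagonal sign matrix preserves the characteristic polynomial. -/
lemma charpoly_diag_conj (s : V → ℝ) (hs : ∀ v, s v * s v = 1) (M : Matrix V V ℝ) :
    (diagonal s * M * diagonal s).charpoly = M.charpoly := by
  have hDD : (diagonal s : Matrix V V ℝ) * diagonal s = 1 := by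
    rw [diagonal_mul_diagonal]
    convert diagonal_one with v
    exact hs v
  set D' : Matrix V V ℝ[X] := (diagonal s).map C with hD'
  have hDD' : D' * D' = 1 := by
    rw [hD', ← Matrix.map_mul, hDD, Matrix.map_one C C_0 C_1]
  have hchar : charmatrix (diagonal s * M * diagonal s) = D' * charmatrix M * D' := by
    rw [charmatrix, charmatrix]
    have hmap : ((diagonal s * M * diagonal s).map (C : ℝ → ℝ[X]))
        = D' * M.map C * D' := by
      rw [hD', ← Matrix.map_mul, ← Matrix.map_mul]
    have hscal : D' * (Matrix.scalar V (X : ℝ[X])) * D' = Matrix.scalar V (X : ℝ[X]) :=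
      calc D' * (Matrix.scalar V (X : ℝ[X])) * D'
          = Matrix.scalar V (X : ℝ[X]) * (D' * D') := by
            rw [← (Matrix.scalar_commute (X : ℝ[X]) (Commute.all X) D').eq, mul_assoc]
        _ = Matrix.scalar V (X : ℝ[X]) := by rw [hDD', mul_one]
    rw [RingHom.mapMatrix_apply, RingHom.mapMatrix_apply, hmap, mul_sub, sub_mul, hscal]
  rw [Matrix.charpoly, Matrix.charpoly, hchar, det_mul, det_mul, mul_comm, ← mul_assoc, ← det_mul,
    hDD', det_one, one_mul]

lemma symm_conj (G : SimpleGraph V) [DecidableRel G.Adj] (c : G.Coloring (Fin 2)) :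
    diagonal (fun v => if c v = 0 then (1 : ℝ) else -1) * G.signlessLapMatrix *
      diagonal (fun v => if c v = 0 then (1 : ℝ) else -1) = G.lapMatrix ℝ := by
  set s : V → ℝ := fun v => if c v = 0 then (1 : ℝ) else -1 with hsdef
  have hfin : ∀ a : Fin 2, a ≠ 0 → a = 1 := by decide
  ext i j
  rw [Matrix.mul_diagonal, Matrix.diagonal_mul]
  simp only [SimpleGraph.signlessLapMatrix, SimpleGraph.lapMatrix, Matrix.add_apply,
    Matrix.sub_apply, SimpleGraph.degMatrix, Matrix.diagonal_apply, SimpleGraph.adjMatrix_apply]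
  by_cases hij : i = j
  · subst hij
    simp only [if_pos rfl, G.irrefl, if_false, add_zero, sub_zero]
    by_cases hci : c i = 0 <;> simp [s, hci]
  · simp only [if_neg hij, zero_add, zero_sub]
    by_cases hadj : G.Adj i j
    · simp only [if_pos hadj]
      have hne : c i ≠ c j := c.valid hadj
      by_cases hci : c i = 0
      · have hcj : c j = 1 := hfin _ (fun h => hne (by rw [hci, h]))
        simp [s, hci, hcj]
      · have hci1 : c i = 1 := hfin _ hci
        have hcj : c j = 0 := by
          by_contra h
          exact hne (by rw [hci1, hfin _ h])
        simp [s, hci, hcj]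
    · simp [hadj]

/-- kernel stability for symmetric real matrices -/
lemma ker_pow (M : Matrix V V ℝ) (hM : Mᵀ = M) :
    ∀ (k : ℕ) (x : V → ℝ), ((Matrix.toLin' M) ^ k) x = 0 → Matrix.toLin' M x = 0 := by
  have h2 : ∀ y : V → ℝ, M *ᵥ (M *ᵥ y) = 0 → M *ᵥ y = 0 := by
    intro y h
    have h0 : y ⬝ᵥ (M *ᵥ (M *ᵥ y)) = 0 := by rw [h, dotProduct_zero]
    rw [dotProduct_mulVec, ← Matrix.mulVec_transpose, hM] at h0
    exact dotProduct_self_eq_zero.mp h0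
  intro k
  induction k with
  | zero => intro x hx; rw [pow_zero, Module.End.one_apply] at hx; rw [hx, map_zero]
  | succ n ih =>
    intro x hx
    rw [pow_succ, Module.End.mul_apply] at hx
    have h1 := ih _ hx
    rw [Matrix.toLin'_apply, Matrix.toLin'_apply] at h1
    rw [Matrix.toLin'_apply]
    exact h2 x h1

lemma maxGen_eq_ker (M : Matrix V V ℝ) (hM : Mᵀ = M) :
    Module.End.maxGenEigenspace (Matrix.toLin' M) 0
      = LinearMap.ker (Matrix.toLin' M) := by
  ext x
  rw [Module.End.mem_maxGenEigenspace, LinearMap.mem_ker]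
  simp only [zero_smul, sub_zero]
  constructor
  · rintro ⟨k, hk⟩
    exact ker_pow M hM k x hk
  · intro h
    exact ⟨1, by rwa [pow_one]⟩

lemma quadform (G : SimpleGraph V) [DecidableRel G.Adj] (x : V → ℝ) :
    2 * (x ⬝ᵥ (G.signlessLapMatrix *ᵥ x)) =
      ∑ i, ∑ j, if G.Adj i j then (x i + x j) ^ 2 else 0 := by
  have e1 : x ⬝ᵥ (G.signlessLapMatrix *ᵥ x)
      = ∑ i, ∑ j, if G.Adj i j then x i * x i + x i * x j else 0 := by
    rw [SimpleGraph.signlessLapMatrix, add_mulVec, dotProduct_add,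
      SimpleGraph.dotProduct_mulVec_degMatrix, SimpleGraph.dotProduct_mulVec_adjMatrix]
    simp_rw [G.degree_eq_sum_if_adj (R := ℝ), sum_mul, ite_mul, one_mul, zero_mul]
    rw [← Finset.sum_add_distrib]
    refine Finset.sum_congr rfl fun i _ => ?_
    rw [← Finset.sum_add_distrib]
    exact Finset.sum_congr rfl fun j _ => by rw [ite_add_ite, add_zero]
  have e2 : x ⬝ᵥ (G.signlessLapMatrix *ᵥ x)
      = ∑ i, ∑ j, if G.Adj i j then x j * x j + x i * x j else 0 := by
    rw [e1, Finset.sum_comm]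
    refine Finset.sum_congr rfl fun i _ => Finset.sum_congr rfl fun j _ => ?_
    exact if_congr (G.adj_comm j i) (by ring) rfl
  rw [two_mul]
  nth_rewrite 1 [e1]
  nth_rewrite 1 [e2]
  rw [← Finset.sum_add_distrib]
  refine Finset.sum_congr rfl fun i _ => ?_
  rw [← Finset.sum_add_distrib]
  refine Finset.sum_congr rfl fun j _ => ?_
  rw [ite_add_ite, add_zero]
  exact if_congr Iff.rfl (by ring) rfl

lemma posdef (G : SimpleGraph V) [DecidableRel G.Adj] (hconn : G.Connected)
    (hncol : ¬ G.Colorable 2) : G.signlessLapMatrix.PosDef := by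
  have hsymm : G.signlessLapMatrix.IsHermitian := by
    rw [Matrix.IsHermitian, conjTranspose_eq_transpose_of_trivial]
    exact (G.isSymm_degMatrix (R := ℝ)).add (G.isSymm_adjMatrix (α := ℝ))
  refine posDef_iff_dotProduct_mulVec.mpr ⟨hsymm, fun x hx => ?_⟩
  rw [star_trivial]
  have hnn : (0:ℝ) ≤ ∑ i, ∑ j, if G.Adj i j then (x i + x j)^2 else 0 := by
    refine Finset.sum_nonneg fun i _ => Finset.sum_nonneg fun j _ => ?_
    by_cases h : G.Adj i j <;> simp [h] <;> positivity
  have hq := quadform G x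
  rcases eq_or_lt_of_le (by linarith : (0:ℝ) ≤ x ⬝ᵥ (G.signlessLapMatrix *ᵥ x)) with heq | hlt
  swap
  · exact hlt
  exfalso
  have hzero : ∑ i, ∑ j, (if G.Adj i j then (x i + x j)^2 else 0) = 0 := by
    rw [← hq, ← heq]; ring
  have hadjx : ∀ i j, G.Adj i j → x i = - x j := by
    intro i j hadj
    have h1 := (Finset.sum_eq_zero_iff_of_nonneg (fun i _ => Finset.sum_nonneg fun j _ => by
      by_cases h : G.Adj i j <;> simp [h] <;> positivity)).mp hzero i (Finset.mem_univ i)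
    have h2 := (Finset.sum_eq_zero_iff_of_nonneg (fun j _ => by
      by_cases h : G.Adj i j <;> simp [h] <;> positivity)).mp h1 j (Finset.mem_univ j)
    rw [if_pos hadj] at h2
    have := pow_eq_zero_iff (n := 2) (by norm_num) |>.mp h2
    linarith
  -- propagation along walks
  have hwalk : ∀ (v w : V) (p : G.Walk v w), x w = x v ∨ x w = - x v := by
    intro v w p
    induction p with
    | nil => exact Or.inl rfl
    | @cons a b c hab q ih =>
      have hxv : x b = - x a := by linarith [hadjx a b hab]
      rcases ih with h1 | h1
      · right; rw [h1, hxv]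
      · left; rw [h1, hxv]; ring
  obtain ⟨v0, hv0⟩ : ∃ v, x v ≠ 0 := by
    by_contra h
    push_neg at h
    exact hx (funext h)
  have hne : ∀ v, x v ≠ 0 := by
    intro v
    obtain ⟨p⟩ := hconn v0 v
    rcases hwalk v0 v p with h | h <;> rw [h] <;> simpa using hv0
  -- build a 2-coloring
  refine hncol ?_
  have col : G.Coloring (Fin 2) := SimpleGraph.Coloring.mk (fun v => if 0 < x v then 0 else 1)
    (by
      intro v w hadj
      have hvw := hadjx v w hadj
      by_cases hv : 0 < x v
      · have hw : ¬ 0 < x w := by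
          intro hw; linarith
        simp [hv, hw]
      · have hv' : x v < 0 := lt_of_le_of_ne (not_lt.mp hv) (hne v)
        have hw : 0 < x w := by linarith
        simp [hv, hw])
  simpa using col.colorable

lemma prod_add_two {ι : Type*} [DecidableEq ι] (s : Finset ι) (b c : ι → ZMod 4) :
    ∏ i ∈ s, (b i + 2 * c i)
      = (∏ i ∈ s, b i) + 2 * ∑ i ∈ s, (c i * ∏ j ∈ s.erase i, b j) := by
  classical
  induction s using Finset.induction_on with
  | empty => simp
  | insert a s ha ih =>
    rw [Finset.prod_insert ha, Finset.prod_insert ha, ih, Finset.sum_insert ha,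
      Finset.erase_insert ha]
    have hrw : ∀ i ∈ s, c i * ∏ j ∈ (insert a s).erase i, b j
        = b a * (c i * ∏ j ∈ s.erase i, b j) := by
      intro i hi
      have hne : a ≠ i := fun h => ha (h ▸ hi)
      rw [Finset.erase_insert_of_ne hne,
        Finset.prod_insert (fun h => ha (Finset.mem_of_mem_erase h))]
      ring
    rw [Finset.sum_congr rfl hrw, ← Finset.mul_sum]
    have h4 : (2 : ZMod 4) * 2 = 0 := by decide
    linear_combination (c a * ∑ i ∈ s, (c i * ∏ j ∈ s.erase i, b j)) * h4

lemma det_expand (B C : Matrix V V (ZMod 4)) :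
    Matrix.det (Matrix.of fun i j => B i j + 2 * C i j)
      = B.det + 2 * ∑ i, (B.updateCol i (fun k => C k i)).det := by
  have hupd : ∀ i : V, (B.updateCol i (fun k => C k i)).det
      = ∑ σ : Equiv.Perm V, ((Equiv.Perm.sign σ : ℤ) : ZMod 4)
          * (C (σ i) i * ∏ j ∈ univ.erase i, B (σ j) j) := by
    intro i
    rw [det_apply']
    refine Finset.sum_congr rfl fun σ _ => ?_
    congr 1
    rw [← Finset.mul_prod_erase univ _ (Finset.mem_univ i)]
    congr 1
    · rw [updateCol_apply, if_pos rfl]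
    · refine Finset.prod_congr rfl fun j hj => ?_
      rw [updateCol_apply, if_neg (Finset.ne_of_mem_erase hj)]
  rw [det_apply', det_apply']
  have hterm : ∀ σ : Equiv.Perm V,
      (∏ i, (Matrix.of fun i j => B i j + 2 * C i j) (σ i) i)
        = (∏ i, B (σ i) i) + 2 * ∑ i, (C (σ i) i * ∏ j ∈ univ.erase i, B (σ j) j) := by
    intro σ
    simpa using prod_add_two univ (fun i => B (σ i) i) (fun i => C (σ i) i)
  simp_rw [hterm, mul_add]
  rw [Finset.sum_add_distrib]
  congr 1
  simp_rw [hupd, Finset.mul_sum]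
  rw [Finset.sum_comm]
  exact Finset.sum_congr rfl fun σ _ => Finset.sum_congr rfl fun i _ => by ring

lemma lap_adjugate_const (G : SimpleGraph V) [DecidableRel G.Adj] (hconn : G.Connected) :
    ∀ i j k l : V, (G.lapMatrix ℤ).adjugate i j = (G.lapMatrix ℤ).adjugate k l := by
  have hmap : (G.lapMatrix ℤ).map (Int.cast : ℤ → ℝ) = G.lapMatrix ℝ := by
    ext i j
    simp [SimpleGraph.lapMatrix, SimpleGraph.degMatrix, Matrix.sub_apply, Matrix.map_apply,
      Matrix.diagonal_apply, SimpleGraph.adjMatrix_apply, apply_ite (Int.cast : ℤ → ℝ)]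
  have hdet0 : (G.lapMatrix ℝ).det = 0 := by
    rw [← Matrix.exists_mulVec_eq_zero_iff]
    refine ⟨fun _ => 1, ?_, G.lapMatrix_mulVec_const_eq_zero⟩
    intro h
    have := congrFun h (hconn.nonempty.some)
    norm_num at this
  have hker : ∀ y : V → ℝ, G.lapMatrix ℝ *ᵥ y = 0 → ∀ i k : V, y i = y k := by
    intro y hy i k
    exact (G.lapMatrix_mulVec_eq_zero_iff_forall_reachable).mp hy i k (hconn i k)
  have hcol : ∀ (j i k : V), (G.lapMatrix ℝ).adjugate i j = (G.lapMatrix ℝ).adjugate k j := by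
    intro j i k
    refine hker (fun i => (G.lapMatrix ℝ).adjugate i j) ?_ i k
    funext i
    have h0 : (G.lapMatrix ℝ * (G.lapMatrix ℝ).adjugate) i j = 0 := by
      rw [Matrix.mul_adjugate, hdet0, zero_smul, Matrix.zero_apply]
    rw [Pi.zero_apply, ← h0, Matrix.mul_apply]
    rfl
  have hT : (G.lapMatrix ℝ)ᵀ = G.lapMatrix ℝ := G.isSymm_lapMatrix (R := ℝ)
  have hsym : ∀ i j : V, (G.lapMatrix ℝ).adjugate i j = (G.lapMatrix ℝ).adjugate j i := by
    intro i j
    conv_rhs => rw [← hT]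
    rw [← Matrix.adjugate_transpose, Matrix.transpose_apply]
  have hR : ∀ i j k l : V, (G.lapMatrix ℝ).adjugate i j = (G.lapMatrix ℝ).adjugate k l := by
    intro i j k l
    calc (G.lapMatrix ℝ).adjugate i j = (G.lapMatrix ℝ).adjugate j j := hcol j i j
      _ = (G.lapMatrix ℝ).adjugate l j := hcol j j l
      _ = (G.lapMatrix ℝ).adjugate j l := hsym l j
      _ = (G.lapMatrix ℝ).adjugate l l := hcol l j l
      _ = (G.lapMatrix ℝ).adjugate k l := (hcol l k l).symm
  intro i j k l
  have hcast := RingHom.map_adjugate (Int.castRingHom ℝ) (G.lapMatrix ℤ)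
  have hentry : ∀ a b : V, ((G.lapMatrix ℤ).adjugate a b : ℝ) = (G.lapMatrix ℝ).adjugate a b := by
    intro a b
    have := congrFun (congrFun hcast a) b
    simpa [RingHom.mapMatrix_apply, Matrix.map_apply, hmap] using this
  have : ((G.lapMatrix ℤ).adjugate i j : ℝ) = ((G.lapMatrix ℤ).adjugate k l : ℝ) := by
    rw [hentry, hentry]; exact hR i j k l
  exact_mod_cast this

lemma div4 (G : SimpleGraph V) [DecidableRel G.Adj] (hconn : G.Connected) :
    4 ∣ (G.degMatrix ℤ + G.adjMatrix ℤ).det := by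
  have hmap : (G.lapMatrix ℤ).map (Int.cast : ℤ → ℝ) = G.lapMatrix ℝ := by
    ext i j
    simp [SimpleGraph.lapMatrix, SimpleGraph.degMatrix, Matrix.sub_apply, Matrix.map_apply,
      Matrix.diagonal_apply, SimpleGraph.adjMatrix_apply, apply_ite (Int.cast : ℤ → ℝ)]
  have hdet0R : (G.lapMatrix ℝ).det = 0 := by
    rw [← Matrix.exists_mulVec_eq_zero_iff]
    refine ⟨fun _ => 1, ?_, G.lapMatrix_mulVec_const_eq_zero⟩
    intro h
    have := congrFun h (hconn.nonempty.some)
    norm_num at this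
  have hdet0 : (G.lapMatrix ℤ).det = 0 := by
    have h := RingHom.map_det (Int.castRingHom ℝ) (G.lapMatrix ℤ)
    rw [RingHom.mapMatrix_apply, Int.coe_castRingHom, hmap, hdet0R] at h
    simpa using h
  obtain ⟨v0⟩ := hconn.nonempty
  set c0 : ℤ := (G.lapMatrix ℤ).adjugate v0 v0 with hc0
  have hconst := lap_adjugate_const G hconn
  set f : ℤ →+* ZMod 4 := Int.castRingHom (ZMod 4) with hf
  suffices h40 : (((G.degMatrix ℤ + G.adjMatrix ℤ).det : ℤ) : ZMod 4) = 0 by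
    have := (ZMod.intCast_zmod_eq_zero_iff_dvd ((G.degMatrix ℤ + G.adjMatrix ℤ).det) 4).mp h40
    exact_mod_cast this
  have hdetmap : ((G.degMatrix ℤ + G.adjMatrix ℤ).det : ZMod 4)
      = (f.mapMatrix (G.degMatrix ℤ + G.adjMatrix ℤ)).det := by
    rw [← RingHom.map_det]; rfl
  rw [hdetmap]
  have hQmap : f.mapMatrix (G.degMatrix ℤ + G.adjMatrix ℤ)
      = Matrix.of fun i j => (f.mapMatrix (G.lapMatrix ℤ)) i j
          + 2 * (f.mapMatrix (G.adjMatrix ℤ)) i j := by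
    ext i j
    have hentry : (G.degMatrix ℤ + G.adjMatrix ℤ) i j
        = G.lapMatrix ℤ i j + 2 * G.adjMatrix ℤ i j := by
      simp only [SimpleGraph.lapMatrix, Matrix.add_apply, Matrix.sub_apply]
      ring
    show f ((G.degMatrix ℤ + G.adjMatrix ℤ) i j)
        = f (G.lapMatrix ℤ i j) + 2 * f (G.adjMatrix ℤ i j)
    rw [hentry, map_add, _root_.map_mul, map_ofNat]
  rw [hQmap, det_expand]
  have hB0 : (f.mapMatrix (G.lapMatrix ℤ)).det = 0 := by
    rw [← RingHom.map_det, hdet0, map_zero]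
  rw [hB0, zero_add]
  -- rewrite the updateCol determinants via cramer/adjugate
  have hadjB : (f.mapMatrix (G.lapMatrix ℤ)).adjugate = f.mapMatrix ((G.lapMatrix ℤ).adjugate) :=
    (RingHom.map_adjugate f (G.lapMatrix ℤ)).symm
  have hupd : ∀ i : V,
      ((f.mapMatrix (G.lapMatrix ℤ)).updateCol i
        (fun k => (f.mapMatrix (G.adjMatrix ℤ)) k i)).det
      = ∑ k, f c0 * f (G.adjMatrix ℤ k i) := by
    intro i
    rw [← Matrix.cramer_apply, Matrix.cramer_eq_adjugate_mulVec, Matrix.mulVec, dotProduct]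
    refine Finset.sum_congr rfl fun k _ => ?_
    rw [hadjB]
    simp only [RingHom.mapMatrix_apply, Matrix.map_apply]
    rw [hconst i k v0 v0]
  simp_rw [hupd, ← Finset.mul_sum, ← map_sum]
  have hsumAz : (∑ i : V, ∑ k : V, G.adjMatrix ℤ k i) = 2 * (G.edgeFinset.card : ℤ) := by
    have h1 : ∀ i : V, ∑ k : V, G.adjMatrix ℤ k i = (G.degree i : ℤ) := by
      intro i
      rw [G.degree_eq_sum_if_adj (R := ℤ) i]
      refine Finset.sum_congr rfl fun k _ => ?_
      rw [SimpleGraph.adjMatrix_apply]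
      exact if_congr (G.adj_comm k i) rfl rfl
    rw [Finset.sum_congr rfl fun i _ => h1 i]
    have := G.sum_degrees_eq_twice_card_edges
    exact_mod_cast congrArg (Nat.cast : ℕ → ℤ) this
  rw [hsumAz, _root_.map_mul, map_ofNat]
  have h4 : (2 : ZMod 4) * 2 = 0 := by decide
  linear_combination (f c0 * f (G.edgeFinset.card : ℤ)) * h4

end SignlessAux

/-- Let `G` be a connected simple graph. If `G` is bipartite then the
signless Laplacian has `0` as an eigenvalue of multiplicity exactly `1`. If `G` is not
bipartite then `det |L(G)|` is a positive integer divisible by `4`. -/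
theorem signlessLap_zero_eigenvalue {V : Type*} [Fintype V] [DecidableEq V]
    (G : SimpleGraph V) [DecidableRel G.Adj] (hconn : G.Connected) :
    (G.Colorable 2 → (G.signlessLapMatrix).charpoly.rootMultiplicity 0 = 1) ∧
    (¬ G.Colorable 2 → ∃ z : ℤ, (G.signlessLapMatrix).det = (z : ℝ) ∧ 0 < z ∧ 4 ∣ z) := by
  constructor
  · intro hcol
    obtain ⟨c⟩ := hcol
    have hconj := SignlessAux.symm_conj G c
    have hs : ∀ v, (if c v = 0 then (1:ℝ) else -1) * (if c v = 0 then (1:ℝ) else -1) = 1 := by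
      intro v; by_cases h : c v = 0 <;> simp [h]
    have hcp : (G.signlessLapMatrix).charpoly = (G.lapMatrix ℝ).charpoly := by
      rw [← hconj, SignlessAux.charpoly_diag_conj _ hs]
    rw [hcp, Polynomial.rootMultiplicity_eq_natTrailingDegree']
    -- characteristic polynomial via toLin'
    have hcp2 : (G.lapMatrix ℝ).charpoly = (Matrix.toLin' (G.lapMatrix ℝ)).charpoly := by
      rw [← LinearMap.charpoly_toMatrix (Matrix.toLin' (G.lapMatrix ℝ)) (Pi.basisFun ℝ V),
        LinearMap.toMatrix_eq_toMatrix', LinearMap.toMatrix'_toLin']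
    rw [hcp2, ← LinearMap.finrank_maxGenEigenspace_zero_eq,
      SignlessAux.maxGen_eq_ker _ (G.isSymm_lapMatrix (R := ℝ)),
      ← SimpleGraph.card_connectedComponent_eq_finrank_ker_toLin'_lapMatrix]
    have hv := hconn.nonempty
    obtain ⟨v0⟩ := hv
    rw [Fintype.card_eq_one_iff]
    refine ⟨G.connectedComponentMk v0, ?_⟩
    intro cc
    obtain ⟨w, rfl⟩ := cc.exists_rep
    exact SimpleGraph.ConnectedComponent.sound (hconn w v0)
  · intro hncol
    have hmapQ : (G.degMatrix ℤ + G.adjMatrix ℤ).map (Int.cast : ℤ → ℝ)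
        = G.signlessLapMatrix := by
      ext i j
      simp [SimpleGraph.signlessLapMatrix, SimpleGraph.degMatrix, Matrix.add_apply,
        Matrix.map_apply, Matrix.diagonal_apply, SimpleGraph.adjMatrix_apply,
        apply_ite (Int.cast : ℤ → ℝ)]
    have h := RingHom.map_det (Int.castRingHom ℝ) (G.degMatrix ℤ + G.adjMatrix ℤ)
    rw [RingHom.mapMatrix_apply, Int.coe_castRingHom, hmapQ] at h
    refine ⟨(G.degMatrix ℤ + G.adjMatrix ℤ).det, by exact_mod_cast h.symm, ?_,
      SignlessAux.div4 G hconn⟩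
    have hdetpos : (0:ℝ) < (G.signlessLapMatrix).det :=
      (SignlessAux.posdef G hconn hncol).det_pos
    rw [← h] at hdetpos
    simp only [Int.coe_castRingHom] at hdetpos
    exact_mod_cast hdetpos
end

section
/- For any simple graph G, every eigenvalue of the adjacency matrix of the line graph line(G) is at least -2. -/
open Polynomial

open Finset Matrix in
private lemma lineGraph_key {V : Type*} [Fintype V] [DecidableEq V]
    (G : SimpleGraph V) [DecidableRel G.Adj] [DecidableRel G.lineGraph.Adj] :
    (G.lineGraph.adjMatrix ℝ) + 2 • (1 : Matrix G.edgeSet G.edgeSet ℝ) =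
      (Matrix.of fun (e : G.edgeSet) (v : V) => if v ∈ (e : Sym2 V) then (1:ℝ) else 0) *
        (Matrix.of fun (v : V) (e : G.edgeSet) => if v ∈ (e : Sym2 V) then (1:ℝ) else 0) := by
  ext e f
  simp only [Matrix.add_apply, Matrix.mul_apply, Matrix.smul_apply, Matrix.one_apply,
    SimpleGraph.adjMatrix_apply, Matrix.of_apply]
  have hsum : ∑ v : V, (if v ∈ (e : Sym2 V) then (1:ℝ) else 0) *
      (if v ∈ (f : Sym2 V) then (1:ℝ) else 0) =
      ((univ.filter fun v => v ∈ (e : Sym2 V) ∧ v ∈ (f : Sym2 V)).card : ℝ) := by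
    rw [Finset.card_filter]
    push_cast
    refine Finset.sum_congr rfl fun v _ => ?_
    by_cases h1 : v ∈ (e : Sym2 V) <;> by_cases h2 : v ∈ (f : Sym2 V) <;> simp [h1, h2]
  rw [hsum]
  by_cases hef : e = f
  · subst hef
    simp only [SimpleGraph.irrefl, if_pos rfl, if_true]
    obtain ⟨e, he⟩ := e
    induction e with
    | _ a b =>
      have hab : a ≠ b := ((SimpleGraph.mem_edgeSet _).mp he).ne
      have : (univ.filter fun v => v ∈ s(a, b) ∧ v ∈ s(a, b)) = {a, b} := by
        ext v; simp [Sym2.mem_iff, and_self, or_comm]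
      rw [this, Finset.card_insert_of_notMem (by simp [hab]), Finset.card_singleton]
      norm_num
  · simp only [if_neg hef, smul_zero, add_zero]
    by_cases hadj : G.lineGraph.Adj e f
    · rw [if_pos hadj]
      obtain ⟨-, v, hv1, hv2⟩ := SimpleGraph.lineGraph_adj_iff_exists.mp hadj
      have : (univ.filter fun w => w ∈ (e : Sym2 V) ∧ w ∈ (f : Sym2 V)) = {v} := by
        ext w
        simp only [Finset.mem_filter, Finset.mem_univ, true_and, Finset.mem_singleton]
        constructor
        · rintro ⟨hw1, hw2⟩
          by_contra hwv
          exact hef (Subtype.ext (Sym2.eq_of_ne_mem hwv hw1 hv1 hw2 hv2))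
        · rintro rfl; exact ⟨hv1, hv2⟩
      simp [this]
    · rw [if_neg hadj]
      have : (univ.filter fun w => w ∈ (e : Sym2 V) ∧ w ∈ (f : Sym2 V)) = ∅ := by
        ext w
        simp only [Finset.mem_filter, Finset.mem_univ, true_and, Finset.notMem_empty,
          iff_false]
        rintro ⟨hw1, hw2⟩
        exact hadj (SimpleGraph.lineGraph_adj_iff_exists.mpr ⟨Subtype.coe_ne_coe.mp
          (fun hh => hef (Subtype.ext hh)) |>.elim, w, hw1, hw2⟩)
      simp [this]

/-- Every adjacency eigenvalue of a line graph is at least `-2`. -/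
theorem lineGraph_eigenvalue_ge_neg_two {V : Type*} [Fintype V] [DecidableEq V]
    (G : SimpleGraph V) [DecidableRel G.Adj] [DecidableRel G.lineGraph.Adj]
    (lam : ℝ) (h : (G.lineGraph.adjMatrix ℝ).charpoly.IsRoot lam) :
    -2 ≤ lam := by
  classical
  open Matrix in
  set A := G.lineGraph.adjMatrix ℝ with hA
  have hdet : ((Matrix.scalar G.edgeSet) lam - A).det = 0 := by
    have h2 : (Polynomial.evalRingHom lam) A.charmatrix.det = 0 := h
    rw [RingHom.map_det] at h2
    convert h2 using 2
    ext i j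
    by_cases hij : i = j <;>
      simp [Matrix.charmatrix_apply, Matrix.scalar_apply, Matrix.sub_apply,
        Matrix.diagonal_apply, hij]
  obtain ⟨v, hv0, hv⟩ := Matrix.exists_mulVec_eq_zero_iff.mpr hdet
  have hAv : A.mulVec v = lam • v := by
    rw [Matrix.sub_mulVec, sub_eq_zero] at hv
    rw [← hv]
    ext i
    simp [Matrix.scalar_apply, Matrix.smul_mulVec]
  have hpsd := Matrix.posSemidef_self_mul_conjTranspose
    (Matrix.of fun (e : G.edgeSet) (w : V) => if w ∈ (e : Sym2 V) then (1:ℝ) else 0)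
  rw [show (Matrix.of fun (e : G.edgeSet) (w : V) => if w ∈ (e : Sym2 V) then (1:ℝ) else 0)ᴴ
      = (Matrix.of fun (w : V) (e : G.edgeSet) => if w ∈ (e : Sym2 V) then (1:ℝ) else 0) by
    ext w e; simp [Matrix.conjTranspose_apply]] at hpsd
  have hkey := lineGraph_key G
  have h1 : 0 ≤ v ⬝ᵥ ((A + 2 • 1).mulVec v) := by
    rw [hkey]
    simpa using hpsd.dotProduct_mulVec_nonneg v
  have h2 : v ⬝ᵥ ((A + 2 • 1).mulVec v) = (lam + 2) * (v ⬝ᵥ v) := by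
    rw [Matrix.add_mulVec, hAv]
    simp only [dotProduct_add, Matrix.smul_mulVec, Matrix.one_mulVec,
      dotProduct_smul, smul_eq_mul]
    ring
  have hvv : 0 < v ⬝ᵥ v := by
    rcases Function.ne_iff.mp hv0 with ⟨i, hi⟩
    exact Finset.sum_pos' (fun j _ => mul_self_nonneg (v j))
      ⟨i, Finset.mem_univ i, mul_self_pos.mpr hi⟩
  nlinarith [h1, h2, hvv]
end
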